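/- Let R₊ = {e₁, e₂, e₁+e₂, e₁−e₂} ⊂ ℝ² (the positive roots of type B₂). Let H ∈ ℝ² be nonzero and not proportional to any element of R₊. For α ∈ R₊ with ⟪α,H⟫ ≠ 0 set v_H(α) = α/⟪α,H⟫ − H/‖H‖², and let S_H = {v_H(α) : α ∈ R₊, ⟪α,H⟫ ≠ 0}. Then S_H = −S_H if and only if there exist a permutation τ of {1,2}, signs ε ∈ {1,−1}², and c ≠ 0 with H_i = c·ε_i·w_{τ(i)} for i = 1, 2, where w = (1 + 1/√2, 1/√2) (that is, w = e₁ + (e₁+e₂)/√2). -/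

import Mathlib

open scoped RealInnerProductSpace

noncomputable section Stmt12Aux

def vvv (H α : EuclideanSpace ℝ (Fin 2)) : EuclideanSpace ℝ (Fin 2) :=
  (⟪α, H⟫)⁻¹ • α - (‖H‖ ^ 2)⁻¹ • H

lemma vvv_apply (H α : EuclideanSpace ℝ (Fin 2)) (j : Fin 2) :
    (vvv H α) j = (⟪α, H⟫)⁻¹ * α j - (‖H‖ ^ 2)⁻¹ * H j := rfl

lemma neg_apply' (x : EuclideanSpace ℝ (Fin 2)) (j : Fin 2) : (-x) j = -(x j) := rfl

end Stmt12Aux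

set_option maxHeartbeats 1000000 in
/-- Classification of austere orbits for restricted root system of type `B₂`:
for nonzero `H` not proportional to any root, the set
`S_H = {α/⟪α,H⟫ - H/‖H‖²}` is invariant under negation iff `H` is a signed
permutation image of a multiple of `w = e₁ + (e₁+e₂)/√2 = (1+1/√2, 1/√2)`. -/
theorem stmt_12
    (Rp : Set (EuclideanSpace ℝ (Fin 2)))
    (hRp : Rp = {EuclideanSpace.single 0 (1 : ℝ), EuclideanSpace.single 1 (1 : ℝ),
      EuclideanSpace.single 0 (1 : ℝ) + EuclideanSpace.single 1 1,
      EuclideanSpace.single 0 (1 : ℝ) - EuclideanSpace.single 1 1})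
    (H : EuclideanSpace ℝ (Fin 2)) (hH : H ≠ 0)
    (hprop : ∀ α ∈ Rp, ∀ c : ℝ, H ≠ c • α)
    (S : Set (EuclideanSpace ℝ (Fin 2)))
    (hS : S = {y | ∃ α ∈ Rp, ⟪α, H⟫ ≠ 0 ∧ y = (⟪α, H⟫)⁻¹ • α - (‖H‖ ^ 2)⁻¹ • H}) :
    (fun y => -y) '' S = S ↔
      ∃ τ : Equiv.Perm (Fin 2), ∃ ε : Fin 2 → ℝ, (∀ i, ε i = 1 ∨ ε i = -1) ∧
        ∃ c : ℝ, c ≠ 0 ∧ ∀ i, H i = c * ε i *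
          (if (τ i).val = 0 then 1 + (Real.sqrt 2)⁻¹ else (Real.sqrt 2)⁻¹) := by
  have hfin : ∀ j : Fin 2, j = 0 ∨ j = 1 := by decide
  set e0 : EuclideanSpace ℝ (Fin 2) := EuclideanSpace.single 0 (1 : ℝ) with he0
  set e1 : EuclideanSpace ℝ (Fin 2) := EuclideanSpace.single 1 (1 : ℝ) with he1
  have e00 : e0 0 = 1 := by simp [he0, EuclideanSpace.single_apply]
  have e01 : e0 1 = 0 := by simp [he0, EuclideanSpace.single_apply]
  have e10 : e1 0 = 0 := by simp [he1, EuclideanSpace.single_apply]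
  have e11 : e1 1 = 1 := by simp [he1, EuclideanSpace.single_apply]
  have p00 : (e0 + e1) 0 = 1 := by
    rw [show (e0 + e1) 0 = e0 0 + e1 0 from rfl, e00, e10]; norm_num
  have p01 : (e0 + e1) 1 = 1 := by
    rw [show (e0 + e1) 1 = e0 1 + e1 1 from rfl, e01, e11]; norm_num
  have m00 : (e0 - e1) 0 = 1 := by
    rw [show (e0 - e1) 0 = e0 0 - e1 0 from rfl, e00, e10]; norm_num
  have m01 : (e0 - e1) 1 = -1 := by
    rw [show (e0 - e1) 1 = e0 1 - e1 1 from rfl, e01, e11]; norm_num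
  set a := H 0 with ha'
  set b := H 1 with hb'
  -- inner products
  have i0 : ⟪e0, H⟫ = a := by simp [he0, EuclideanSpace.inner_single_left, ha']
  have i1 : ⟪e1, H⟫ = b := by simp [he1, EuclideanSpace.inner_single_left, hb']
  have i2 : ⟪e0 + e1, H⟫ = a + b := by rw [inner_add_left, i0, i1]
  have i3 : ⟪e0 - e1, H⟫ = a - b := by rw [inner_sub_left, i0, i1]
  -- nonvanishing
  have hb : b ≠ 0 := by
    intro h
    exact hprop e0 (by rw [hRp]; left; rfl) a
      (by ext j; rcases hfin j with rfl | rfl <;>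
        simp [he0, EuclideanSpace.single_apply, ← ha', ← hb', h])
  have ha : a ≠ 0 := by
    intro h
    exact hprop e1 (by rw [hRp]; right; left; rfl) b
      (by ext j; rcases hfin j with rfl | rfl <;>
        simp [he1, EuclideanSpace.single_apply, ← ha', ← hb', h])
  have hab : a - b ≠ 0 := by
    intro h
    refine hprop (e0 + e1) (by rw [hRp]; right; right; left; rfl) a ?_
    have hba : b = a := by linarith
    ext j; rcases hfin j with rfl | rfl
    · rw [show (a • (e0 + e1)) 0 = a * (e0 + e1) 0 from rfl, p00, ← ha']; ring
    · rw [show (a • (e0 + e1)) 1 = a * (e0 + e1) 1 from rfl, p01, ← hb', hba]; ring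
  have hab' : a + b ≠ 0 := by
    intro h
    refine hprop (e0 - e1) (by rw [hRp]; right; right; right; rfl) a ?_
    have hba : b = -a := by linarith
    ext j; rcases hfin j with rfl | rfl
    · rw [show (a • (e0 - e1)) 0 = a * (e0 - e1) 0 from rfl, m00, ← ha']; ring
    · rw [show (a • (e0 - e1)) 1 = a * (e0 - e1) 1 from rfl, m01, ← hb', hba]; ring
  have hn : ‖H‖ ^ 2 = a ^ 2 + b ^ 2 := by
    rw [EuclideanSpace.norm_eq, Real.sq_sqrt (by positivity), Fin.sum_univ_two,
      Real.norm_eq_abs, Real.norm_eq_abs, sq_abs, sq_abs]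
  have hn0 : a ^ 2 + b ^ 2 ≠ 0 := by positivity
  -- membership characterization
  have hmem : ∀ y, y ∈ S ↔
      (y = vvv H e0 ∨ y = vvv H e1 ∨ y = vvv H (e0 + e1) ∨ y = vvv H (e0 - e1)) := by
    intro y
    rw [hS, hRp]
    simp only [Set.mem_setOf_eq, Set.mem_insert_iff, Set.mem_singleton_iff]
    constructor
    · rintro ⟨α, (rfl | rfl | rfl | rfl), -, rfl⟩
      · exact Or.inl rfl
      · exact Or.inr (Or.inl rfl)
      · exact Or.inr (Or.inr (Or.inl rfl))
      · exact Or.inr (Or.inr (Or.inr rfl))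
    · rintro (rfl | rfl | rfl | rfl)
      · exact ⟨e0, Or.inl rfl, by rw [i0]; exact ha, rfl⟩
      · exact ⟨e1, Or.inr (Or.inl rfl), by rw [i1]; exact hb, rfl⟩
      · exact ⟨e0 + e1, Or.inr (Or.inr (Or.inl rfl)), by rw [i2]; exact hab', rfl⟩
      · exact ⟨e0 - e1, Or.inr (Or.inr (Or.inr rfl)), by rw [i3]; exact hab, rfl⟩
  -- square root facts
  set s := Real.sqrt 2 with hs'
  have hs2 : s ^ 2 = 2 := Real.sq_sqrt (by norm_num)
  have hs0 : s ≠ 0 := by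
    intro h; rw [h] at hs2; norm_num at hs2
  have hs1 : s - 1 ≠ 0 := by
    intro h
    have : s = 1 := by linarith
    rw [this] at hs2; norm_num at hs2
  -- main reduction
  have main : ((fun y => -y) '' S = S) ↔
      (a ^ 2 - 2 * a * b - b ^ 2 = 0 ∨ a ^ 2 + 2 * a * b - b ^ 2 = 0) := by
    constructor
    · intro h
      have hv0 : vvv H e0 ∈ S := (hmem _).2 (Or.inl rfl)
      have hneg : -vvv H e0 ∈ S := by
        rw [← h]; exact ⟨vvv H e0, hv0, rfl⟩
      rcases (hmem _).1 hneg with hc | hc | hc | hc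
      · exfalso
        have h1 := congrArg (fun v : EuclideanSpace ℝ (Fin 2) => v 1) hc
        rw [neg_apply', vvv_apply, i0, hn, e01, ← hb'] at h1
        field_simp at h1
        exact hb (by linarith)
      · exfalso
        have h1 := congrArg (fun v : EuclideanSpace ℝ (Fin 2) => v 0) hc
        rw [neg_apply', vvv_apply, vvv_apply, i0, i1, hn, e00, e10, ← ha'] at h1
        field_simp at h1
        have h2 : (a ^ 2 + b ^ 2) * ((a - b) * (a + b)) = 0 :=
            (mul_eq_zero.1 (show b * ((a ^ 2 + b ^ 2) * ((a - b) * (a + b))) = 0 by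
              linear_combination (a ^ 2 + b ^ 2) * h1)).resolve_left hb
        rcases mul_eq_zero.1 h2 with h3 | h3
        · exact hn0 h3
        · rcases mul_eq_zero.1 h3 with h4 | h4
          · exact hab h4
          · exact hab' h4
      · left
        have h1 := congrArg (fun v : EuclideanSpace ℝ (Fin 2) => v 1) hc
        rw [neg_apply', vvv_apply, vvv_apply, i0, i2, hn, e01, p01, ← hb'] at h1
        field_simp at h1
        have h2 : (a ^ 2 + b ^ 2) * (a ^ 2 - 2 * a * b - b ^ 2) = 0 :=
          (mul_eq_zero.1 (show a * ((a ^ 2 + b ^ 2) * (a ^ 2 - 2 * a * b - b ^ 2)) = 0 by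
            linear_combination (-(a ^ 2 + b ^ 2)) * h1)).resolve_left ha
        exact (mul_eq_zero.1 h2).resolve_left hn0
      · right
        have h1 := congrArg (fun v : EuclideanSpace ℝ (Fin 2) => v 1) hc
        rw [neg_apply', vvv_apply, vvv_apply, i0, i3, hn, e01, m01, ← hb'] at h1
        field_simp at h1
        have h2 : (a ^ 2 + b ^ 2) * (a ^ 2 + 2 * a * b - b ^ 2) = 0 :=
          (mul_eq_zero.1 (show a * ((a ^ 2 + b ^ 2) * (a ^ 2 + 2 * a * b - b ^ 2)) = 0 by
            linear_combination (a ^ 2 + b ^ 2) * h1)).resolve_left ha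
        exact (mul_eq_zero.1 h2).resolve_left hn0
    · intro hD
      have hclosed : ∀ y ∈ S, -y ∈ S := by
        intro y hy
        rcases hD with h1 | h1
        · rcases (hmem _).1 hy with rfl | rfl | rfl | rfl
          · refine (hmem _).2 (Or.inr (Or.inr (Or.inl ?_)))
            ext j
            rw [neg_apply', vvv_apply, vvv_apply, i0, i2, hn]
            rcases hfin j with rfl | rfl
            · rw [e00, p00, ← ha']; field_simp; linear_combination (b) * h1
            · rw [e01, p01, ← hb']; field_simp; linear_combination (-a) * h1
          · refine (hmem _).2 (Or.inr (Or.inr (Or.inr ?_)))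
            ext j
            rw [neg_apply', vvv_apply, vvv_apply, i1, i3, hn]
            rcases hfin j with rfl | rfl
            · rw [e10, m00, ← ha']; field_simp; linear_combination (b) * h1
            · rw [e11, m01, ← hb']; field_simp; linear_combination (-a) * h1
          · refine (hmem _).2 (Or.inl ?_)
            ext j
            rw [neg_apply', vvv_apply, vvv_apply, i0, i2, hn]
            rcases hfin j with rfl | rfl
            · rw [e00, p00, ← ha']; field_simp; linear_combination (b) * h1
            · rw [e01, p01, ← hb']; field_simp; linear_combination (-a) * h1
          · refine (hmem _).2 (Or.inr (Or.inl ?_))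
            ext j
            rw [neg_apply', vvv_apply, vvv_apply, i1, i3, hn]
            rcases hfin j with rfl | rfl
            · rw [e10, m00, ← ha']; field_simp; linear_combination (b) * h1
            · rw [e11, m01, ← hb']; field_simp; linear_combination (-a) * h1
        · rcases (hmem _).1 hy with rfl | rfl | rfl | rfl
          · refine (hmem _).2 (Or.inr (Or.inr (Or.inr ?_)))
            ext j
            rw [neg_apply', vvv_apply, vvv_apply, i0, i3, hn]
            rcases hfin j with rfl | rfl
            · rw [e00, m00, ← ha']; field_simp; linear_combination (-b) * h1
            · rw [e01, m01, ← hb']; field_simp; linear_combination (a) * h1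
          · refine (hmem _).2 (Or.inr (Or.inr (Or.inl ?_)))
            ext j
            rw [neg_apply', vvv_apply, vvv_apply, i1, i2, hn]
            rcases hfin j with rfl | rfl
            · rw [e10, p00, ← ha']; field_simp; linear_combination (b) * h1
            · rw [e11, p01, ← hb']; field_simp; linear_combination (-a) * h1
          · refine (hmem _).2 (Or.inr (Or.inl ?_))
            ext j
            rw [neg_apply', vvv_apply, vvv_apply, i1, i2, hn]
            rcases hfin j with rfl | rfl
            · rw [e10, p00, ← ha']; field_simp; linear_combination (b) * h1
            · rw [e11, p01, ← hb']; field_simp; linear_combination (-a) * h1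
          · refine (hmem _).2 (Or.inl ?_)
            ext j
            rw [neg_apply', vvv_apply, vvv_apply, i0, i3, hn]
            rcases hfin j with rfl | rfl
            · rw [e00, m00, ← ha']; field_simp; linear_combination (-b) * h1
            · rw [e01, m01, ← hb']; field_simp; linear_combination (a) * h1
      ext y
      constructor
      · rintro ⟨x, hx, rfl⟩; exact hclosed x hx
      · intro hy; exact ⟨-y, hclosed y hy, neg_neg y⟩
  rw [main]
  have hsw0 : (Equiv.swap (0 : Fin 2) 1) 0 = 1 := Equiv.swap_apply_left 0 1
  have hsw1 : (Equiv.swap (0 : Fin 2) 1) 1 = 0 := Equiv.swap_apply_right 0 1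
  constructor
  · rintro (h1 | h1)
    · have hfac : (a - b - s * b) * (a - b + s * b) = 0 := by
        linear_combination h1 - b ^ 2 * hs2
      rcases mul_eq_zero.1 hfac with hx | hx
      · -- a = b(1+s) : identity perm, ε = 1
        refine ⟨Equiv.refl _, fun _ => 1, fun i => Or.inl rfl, b * s,
          mul_ne_zero hb hs0, ?_⟩
        intro i; rcases hfin i with rfl | rfl
        · rw [← ha']
          simp only [Equiv.refl_apply, Fin.val_zero, reduceIte]
          field_simp
          linear_combination hx
        · rw [← hb']
          simp only [Equiv.refl_apply, Fin.val_one, reduceIte, Nat.one_ne_zero, if_false]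
          field_simp
      · -- a = b(1-s) : swap, ε = (-1, 1)
        refine ⟨Equiv.swap 0 1, fun i => if i.val = 0 then -1 else 1,
          fun i => by rcases hfin i with rfl | rfl <;> simp, b * s * (s - 1),
          mul_ne_zero (mul_ne_zero hb hs0) hs1, ?_⟩
        intro i; rcases hfin i with rfl | rfl
        · rw [← ha', hsw0]
          simp only [Fin.val_zero, Fin.val_one, reduceIte, Nat.one_ne_zero, if_false]
          field_simp
          linear_combination hx
        · rw [← hb', hsw1]
          simp only [Fin.val_zero, Fin.val_one, reduceIte, Nat.one_ne_zero, if_false]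
          field_simp
          linear_combination (-1) * hs2
    · have hfac : (a + b - s * b) * (a + b + s * b) = 0 := by
        linear_combination h1 - b ^ 2 * hs2
      rcases mul_eq_zero.1 hfac with hx | hx
      · -- a = b(s-1) : swap, ε = 1
        refine ⟨Equiv.swap 0 1, fun _ => 1, fun i => Or.inl rfl, b * s * (s - 1),
          mul_ne_zero (mul_ne_zero hb hs0) hs1, ?_⟩
        intro i; rcases hfin i with rfl | rfl
        · rw [← ha', hsw0]
          simp only [Fin.val_zero, Fin.val_one, reduceIte, Nat.one_ne_zero, if_false]
          field_simp
          linear_combination hx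
        · rw [← hb', hsw1]
          simp only [Fin.val_zero, Fin.val_one, reduceIte, Nat.one_ne_zero, if_false]
          field_simp
          linear_combination (-1) * hs2
      · -- a = -b(s+1) : id, ε = (-1, 1)
        refine ⟨Equiv.refl _, fun i => if i.val = 0 then -1 else 1,
          fun i => by rcases hfin i with rfl | rfl <;> simp, b * s,
          mul_ne_zero hb hs0, ?_⟩
        intro i; rcases hfin i with rfl | rfl
        · rw [← ha']
          simp only [Equiv.refl_apply, Fin.val_zero, Fin.val_one, reduceIte, Nat.one_ne_zero, if_false]
          field_simp
          linear_combination hx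
        · rw [← hb']
          simp only [Equiv.refl_apply, Fin.val_zero, Fin.val_one, reduceIte, Nat.one_ne_zero, if_false]
          field_simp
  · rintro ⟨τ, ε, hε, c, hc, hf⟩
    have hf0 := hf 0
    have hf1 := hf 1
    rw [← ha'] at hf0
    rw [← hb'] at hf1
    have he0' : ε 0 = 1 ∨ ε 0 = -1 := hε 0
    have he1' : ε 1 = 1 ∨ ε 1 = -1 := hε 1
    rcases hfin (τ 0) with ht0 | ht0
    · have ht1 : τ 1 = 1 := by
        rcases hfin (τ 1) with h | h
        · exact absurd (τ.injective (h.trans ht0.symm)) (by decide)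
        · exact h
      rw [ht0] at hf0; rw [ht1] at hf1
      simp only [Fin.val_zero, Fin.val_one, reduceIte, Nat.one_ne_zero, if_false] at hf0 hf1
      rcases he0' with h0 | h0 <;> rcases he1' with h1 | h1 <;>
          rw [h0] at hf0 <;> rw [h1] at hf1
      · left; rw [hf0, hf1]; field_simp; linear_combination c ^ 2 * hs2
      · right; rw [hf0, hf1]; field_simp; linear_combination c ^ 2 * hs2
      · right; rw [hf0, hf1]; field_simp; linear_combination c ^ 2 * hs2
      · left; rw [hf0, hf1]; field_simp; linear_combination c ^ 2 * hs2
    · have ht1 : τ 1 = 0 := by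
        rcases hfin (τ 1) with h | h
        · exact h
        · exact absurd (τ.injective (h.trans ht0.symm)) (by decide)
      rw [ht0] at hf0; rw [ht1] at hf1
      simp only [Fin.val_zero, Fin.val_one, reduceIte, Nat.one_ne_zero, if_false] at hf0 hf1
      rcases he0' with h0 | h0 <;> rcases he1' with h1 | h1 <;>
          rw [h0] at hf0 <;> rw [h1] at hf1
      · right; rw [hf0, hf1]; field_simp; linear_combination (-c ^ 2) * hs2
      · left; rw [hf0, hf1]; field_simp; linear_combination (-c ^ 2) * hs2
      · left; rw [hf0, hf1]; field_simp; linear_combination (-c ^ 2) * hs2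
      · right; rw [hf0, hf1]; field_simp; linear_combination (-c ^ 2) * hs2
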